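/- For every positive integer n, the sum over all permutations σ of [n] of (-1) raised to the number of occurrences of the vincular pattern 13-2 in σ equals 2^(n-1). (This is the q = -1 evaluation of the generating function of the number of occurrences of 13-2, showing it exhibits the cyclic sieving phenomenon for involutions with 2^(n-1) fixed points.) -/

import Mathlib

open Finset Equiv

variable {n : ℕ}

def S (n : ℕ) (σ : Equiv.Perm (Fin n)) : Finset (Fin n × Fin n) :=
  univ.filter (fun p : Fin n × Fin n =>
        ∃ i1 : Fin n, (i1 : ℕ) = (p.1 : ℕ) + 1 ∧ i1 < p.2 ∧
          σ p.1 < σ p.2 ∧ σ p.2 < σ i1)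

def occ (σ : Equiv.Perm (Fin n)) : ℕ := (S n σ).card

def E (v : Fin (n+1)) (τ : Equiv.Perm (Fin n)) : Equiv.Perm (Fin (n+1)) :=
  (finSuccEquiv n).trans ((τ.optionCongr).trans (finSuccEquiv' v).symm)

@[simp] lemma E_zero (v : Fin (n+1)) (τ : Equiv.Perm (Fin n)) : E v τ 0 = v := by
  simp [E]

@[simp] lemma E_succ (v : Fin (n+1)) (τ : Equiv.Perm (Fin n)) (j : Fin n) :
    E v τ j.succ = v.succAbove (τ j) := by
  simp [E, finSuccEquiv'_symm_some]

lemma succAbove_val (p : Fin (n+1)) (i : Fin n) :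
    ((p.succAbove i : Fin (n+1)) : ℕ) = if (i:ℕ) < (p:ℕ) then (i:ℕ) else (i:ℕ)+1 := by
  rw [Fin.succAbove]
  split_ifs with h h2 h3 <;> simp_all [Fin.lt_def]

lemma mem_S {σ : Equiv.Perm (Fin n)} {p : Fin n × Fin n} :
    p ∈ S n σ ↔ ∃ i1 : Fin n, (i1 : ℕ) = (p.1 : ℕ) + 1 ∧ i1 < p.2 ∧
      σ p.1 < σ p.2 ∧ σ p.2 < σ i1 := by
  simp [S]

def down (a : Fin (n+2)) : Fin (n+1) := ⟨(a : ℕ) - 1, by omega⟩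

lemma succ_down {a : Fin (n+2)} (ha : a ≠ 0) : (down a).succ = a := by
  have h := Fin.val_ne_of_ne ha
  simp only [Fin.val_zero] at h
  simp only [Fin.ext_iff, Fin.val_succ, down]
  omega

lemma down_succ (j : Fin (n+1)) : down j.succ = j := by
  simp [down, Fin.ext_iff]

lemma lt_succAbove_iff' (v : Fin (n+1)) (x : Fin n) : v < v.succAbove x ↔ (v:ℕ) ≤ (x:ℕ) := by
  rw [Fin.lt_def, succAbove_val]
  split_ifs <;> omega

lemma E_apply_ne_zero (v : Fin (n+2)) (τ : Equiv.Perm (Fin (n+1))) {a : Fin (n+2)}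
    (ha : a ≠ 0) : (E v τ) a = v.succAbove (τ (down a)) := by
  conv_lhs => rw [← succ_down ha]
  rw [E_succ]

lemma E_one (v : Fin (n+2)) (τ : Equiv.Perm (Fin (n+1))) :
    (E v τ) 1 = v.succAbove (τ 0) := by
  rw [← Fin.succ_zero_eq_one, E_succ]

lemma partA (v : Fin (n+2)) (τ : Equiv.Perm (Fin (n+1))) :
    ((S (n+2) (E v τ)).filter (fun p => p.1 = 0)).card = (τ 0 : ℕ) - (v : ℕ) := by
  rw [← Nat.card_Ico]
  apply Finset.card_bij (fun p _ => ((τ (down p.2) : Fin (n+1)) : ℕ))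
  · rintro ⟨a, b⟩ hp
    rw [Finset.mem_filter] at hp
    obtain ⟨hS, ha⟩ := hp
    rw [mem_S] at hS
    obtain ⟨i1, hi1, hlt, h1, h2⟩ := hS
    simp only at ha h1 h2 hi1 hlt
    subst ha
    have hi1' : i1 = 1 := by
      rw [Fin.ext_iff]
      simpa using hi1
    subst hi1'
    have hb0 : b ≠ 0 := by
      intro h
      subst h
      rw [Fin.lt_def] at hlt
      simp at hlt
    rw [E_zero] at h1
    rw [E_one] at h2
    rw [E_apply_ne_zero v τ hb0] at h1 h2
    rw [Finset.mem_Ico]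
    refine ⟨(lt_succAbove_iff' v _).mp h1, ?_⟩
    exact Fin.lt_def.mp (Fin.succAbove_lt_succAbove_iff.mp h2)
  · rintro ⟨a, b⟩ ha ⟨a', b'⟩ ha' h
    rw [Finset.mem_filter] at ha ha'
    have hb0 : b ≠ 0 := by
      rcases ha with ⟨hS, _⟩
      rw [mem_S] at hS
      obtain ⟨i1, hi1, hlt, _, _⟩ := hS
      intro h0
      subst h0
      rw [Fin.lt_def] at hlt
      simp at hlt
    have hb0' : b' ≠ 0 := by
      rcases ha' with ⟨hS, _⟩
      rw [mem_S] at hS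
      obtain ⟨i1, hi1, hlt, _, _⟩ := hS
      intro h0
      subst h0
      rw [Fin.lt_def] at hlt
      simp at hlt
    simp only at h
    have : down b = down b' := τ.injective (Fin.val_injective h)
    have hb : b = b' := by rw [← succ_down hb0, ← succ_down hb0', this]
    have ha1 : a = a' := by
      have h1 : a = 0 := ha.2
      have h2 : a' = 0 := ha'.2
      rw [h1, h2]
    simp [ha1, hb]
  · intro w hw
    rw [Finset.mem_Ico] at hw
    have hwlt : w < n + 1 := by
      have := (τ 0).isLt
      omega
    set wf : Fin (n+1) := ⟨w, hwlt⟩ with hwf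
    set j : Fin (n+1) := τ.symm wf with hj
    have hτj : τ j = wf := τ.apply_symm_apply wf
    have hj0 : j ≠ 0 := by
      intro h0
      rw [h0] at hτj
      have : (τ 0 : ℕ) = w := by rw [hτj]
      omega
    refine ⟨(0, j.succ), ?_, ?_⟩
    · rw [Finset.mem_filter]
      refine ⟨?_, rfl⟩
      rw [mem_S]
      refine ⟨1, by simp, ?_, ?_, ?_⟩
      · rw [Fin.lt_def]
        simp only [Fin.val_one, Fin.val_succ]
        have := Fin.val_ne_of_ne hj0
        simp only [Fin.val_zero] at this
        omega
      · rw [E_zero, E_succ, hτj, lt_succAbove_iff']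
        exact hw.1
      · rw [E_one, E_succ, hτj, Fin.succAbove_lt_succAbove_iff, Fin.lt_def]
        exact hw.2
    · simp [down_succ, hτj, hwf]

lemma partB (v : Fin (n+2)) (τ : Equiv.Perm (Fin (n+1))) :
    ((S (n+2) (E v τ)).filter (fun p => ¬ p.1 = 0)).card = (S (n+1) τ).card := by
  refine Finset.card_bij' (fun p _ => (down p.1, down p.2))
    (fun q _ => (q.1.succ, q.2.succ)) ?hi ?hj ?left ?right
  case hi =>
    rintro ⟨a, b⟩ hp
    rw [Finset.mem_filter] at hp
    obtain ⟨hS, ha0⟩ := hp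
    simp only at ha0
    rw [mem_S] at hS
    obtain ⟨i1, hi1, hlt, h1, h2⟩ := hS
    simp only at hi1 hlt h1 h2
    have hi10 : i1 ≠ 0 := by
      intro h; rw [h] at hi1; simp at hi1
    have hb0 : b ≠ 0 := by
      intro h
      rw [h] at hlt
      exact absurd hlt (by rw [Fin.lt_def]; simp)
    rw [E_apply_ne_zero v τ ha0, E_apply_ne_zero v τ hb0] at h1
    rw [E_apply_ne_zero v τ hb0, E_apply_ne_zero v τ hi10] at h2
    rw [mem_S]
    refine ⟨down i1, ?_, ?_, ?_, ?_⟩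
    · have hav := Fin.val_ne_of_ne ha0
      simp only [Fin.val_zero] at hav
      simp only [down]
      omega
    · have hiv := Fin.val_ne_of_ne hi10
      simp only [Fin.val_zero] at hiv
      rw [Fin.lt_def] at hlt ⊢
      simp only [down]
      omega
    · exact Fin.succAbove_lt_succAbove_iff.mp h1
    · exact Fin.succAbove_lt_succAbove_iff.mp h2
  case hj =>
    rintro ⟨j, l⟩ hq
    rw [mem_S] at hq
    obtain ⟨i1', hi1, hlt, h1, h2⟩ := hq
    simp only at hi1 hlt h1 h2
    rw [Finset.mem_filter]
    constructor
    · rw [mem_S]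
      refine ⟨i1'.succ, ?_, ?_, ?_, ?_⟩
      · simp [hi1]
      · rw [Fin.lt_def] at hlt ⊢
        simpa using hlt
      · rw [E_succ, E_succ, Fin.succAbove_lt_succAbove_iff]
        exact h1
      · rw [E_succ, E_succ, Fin.succAbove_lt_succAbove_iff]
        exact h2
    · simp [Fin.succ_ne_zero]
  case left =>
    rintro ⟨a, b⟩ hp
    rw [Finset.mem_filter] at hp
    obtain ⟨hS, ha0⟩ := hp
    simp only at ha0
    rw [mem_S] at hS
    obtain ⟨i1, hi1, hlt, _, _⟩ := hS
    have hb0 : b ≠ 0 := by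
      intro h
      rw [h] at hlt
      exact absurd hlt (by rw [Fin.lt_def]; simp)
    simp [succ_down ha0, succ_down hb0]
  case right =>
    rintro ⟨j, l⟩ _
    simp [down_succ]

lemma occ_E (v : Fin (n+2)) (τ : Equiv.Perm (Fin (n+1))) :
    occ (E v τ) = occ τ + ((τ 0 : ℕ) - (v : ℕ)) := by
  have := Finset.card_filter_add_card_filter_not
    (s := S (n+2) (E v τ)) (fun p => p.1 = 0)
  rw [occ, occ, ← this, partA, partB]
  ring

def F (m : ℕ) (t : Fin (m+1)) : ℤ :=
  ∑ σ ∈ univ.filter (fun σ : Equiv.Perm (Fin (m+1)) => σ 0 = t), (-1 : ℤ) ^ occ σ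

lemma E_injective (v : Fin (n+1)) : Function.Injective (E (n := n) v) := by
  intro τ τ' h
  apply Equiv.optionCongr_injective
  apply Equiv.ext
  intro x
  have := congrArg (fun (e : Equiv.Perm (Fin (n+1))) =>
    (finSuccEquiv' v) (e ((finSuccEquiv n).symm x))) h
  simpa [E] using this

lemma E_surj (v : Fin (n+1)) (σ : Equiv.Perm (Fin (n+1))) (hσ : σ 0 = v) :
    ∃ τ : Equiv.Perm (Fin n), E v τ = σ := by
  set D : Option (Fin n) ≃ Option (Fin n) :=
    ((finSuccEquiv n).symm.trans (σ.trans (finSuccEquiv' v))) with hD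
  refine ⟨Equiv.removeNone D, ?_⟩
  have key : ∀ j : Fin n, v.succAbove (Equiv.removeNone D j) = σ j.succ := by
    intro j
    have h1 : D (some j) = finSuccEquiv' v (σ j.succ) := by
      simp [hD, finSuccEquiv_succ]
    have hne : σ j.succ ≠ v := by
      rw [← hσ]
      intro h
      exact (Fin.succ_ne_zero j) (σ.injective h)
    have h2 : ∃ x', D (some j) = some x' := by
      rw [h1]
      rcases Option.eq_none_or_eq_some (finSuccEquiv' v (σ j.succ)) with h | ⟨x, h⟩
      · exfalso
        apply hne
        have := congrArg (finSuccEquiv' v).symm h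
        simpa [finSuccEquiv'_symm_none] using this
      · exact ⟨x, h⟩
    have h3 := Equiv.removeNone_some D h2
    rw [h1] at h3
    have := congrArg (finSuccEquiv' v).symm h3
    rw [Equiv.symm_apply_apply] at this
    rw [← this, finSuccEquiv'_symm_some]
  apply Equiv.ext
  intro x
  induction x using Fin.cases with
  | zero => rw [E_zero, hσ]
  | succ j => rw [E_succ, key]

lemma sum_fiber_eq (v : Fin (n+2)) :
    F (n+1) v = ∑ τ : Equiv.Perm (Fin (n+1)), (-1 : ℤ) ^ occ (E v τ) := by
  rw [F]
  symm
  apply Finset.sum_bij (fun τ _ => E v τ)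
  · intro τ _
    rw [Finset.mem_filter]
    exact ⟨Finset.mem_univ _, E_zero v τ⟩
  · intro τ _ τ' _ h
    exact E_injective v h
  · intro σ hσ
    rw [Finset.mem_filter] at hσ
    obtain ⟨τ, hτ⟩ := E_surj v σ hσ.2
    exact ⟨τ, Finset.mem_univ _, hτ⟩
  · intro τ _
    rfl

lemma F_rec (v : Fin (n+2)) :
    F (n+1) v = ∑ t : Fin (n+1), (-1 : ℤ) ^ ((t : ℕ) - (v : ℕ)) * F n t := by
  rw [sum_fiber_eq]
  have hiber := Finset.sum_fiberwise (univ : Finset (Equiv.Perm (Fin (n+1))))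
    (fun τ => τ 0) (fun τ => (-1 : ℤ) ^ ((τ 0 : ℕ) - (v : ℕ) + occ τ))
  calc ∑ τ : Equiv.Perm (Fin (n+1)), (-1 : ℤ) ^ occ (E v τ)
      = ∑ τ : Equiv.Perm (Fin (n+1)), (-1 : ℤ) ^ ((τ 0 : ℕ) - (v : ℕ) + occ τ) := by
        apply Finset.sum_congr rfl
        intro τ _
        rw [occ_E]
        ring_nf
    _ = ∑ t : Fin (n+1), ∑ τ ∈ univ.filter (fun τ : Equiv.Perm (Fin (n+1)) => τ 0 = t),
          (-1 : ℤ) ^ ((τ 0 : ℕ) - (v : ℕ) + occ τ) := hiber.symm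
    _ = ∑ t : Fin (n+1), (-1 : ℤ) ^ ((t : ℕ) - (v : ℕ)) * F n t := by
        apply Finset.sum_congr rfl
        intro t _
        rw [F, Finset.mul_sum]
        apply Finset.sum_congr rfl
        intro τ hτ
        rw [Finset.mem_filter] at hτ
        rw [hτ.2, pow_add]

lemma F_zero (t : Fin 1) : F 0 t = 1 := by
  revert t
  decide

lemma F_closed (m : ℕ) (t : Fin (m+2)) :
    F (m+1) t = if m ≤ (t : ℕ) then 2 ^ m else 0 := by
  induction m with
  | zero =>
    rw [F_rec]
    rw [Fin.sum_univ_one]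
    simp [F_zero]
  | succ m ih =>
    rw [F_rec, Fin.sum_univ_castSucc, Fin.sum_univ_castSucc]
    have hz : ∑ i : Fin m,
        (-1 : ℤ) ^ (((i.castSucc.castSucc : Fin (m+2)) : ℕ) - (t : ℕ)) *
          F (m+1) i.castSucc.castSucc = 0 := by
      apply Finset.sum_eq_zero
      intro i _
      rw [ih]
      have : ¬ m ≤ ((i.castSucc.castSucc : Fin (m+2)) : ℕ) := by
        simp only [Fin.coe_castSucc]
        exact Nat.not_le.mpr i.isLt
      rw [if_neg this, mul_zero]
    rw [hz, zero_add, ih, ih]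
    have hv1 : (((Fin.last m).castSucc : Fin (m+2)) : ℕ) = m := by simp
    have hv2 : ((Fin.last (m+1) : Fin (m+2)) : ℕ) = m + 1 := by simp
    rw [hv1, hv2]
    rw [if_pos (le_refl m), if_pos (Nat.le_succ m)]
    by_cases h : m + 1 ≤ (t : ℕ)
    · have h1 : m - (t : ℕ) = 0 := by omega
      have h2 : m + 1 - (t : ℕ) = 0 := by omega
      rw [h1, h2, if_pos h, pow_zero, pow_succ]
      ring
    · have h2 : m + 1 - (t : ℕ) = (m - (t : ℕ)) + 1 := by omega
      rw [h2, if_neg h, pow_succ]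
      ring

/-- The generating function of the number of occurrences of the vincular
pattern `13-2` on `S_n` evaluated at `q = -1` equals `2^(n-1)`. An occurrence
is a pair of indices `(i,k)` with `i+1 < k` and `σ i < σ k < σ (i+1)`. -/
theorem pattern_13_2_q_eq_neg_one (n : ℕ) (hn : 0 < n) :
    ∑ σ : Equiv.Perm (Fin n),
      (-1 : ℤ) ^ (univ.filter (fun p : Fin n × Fin n =>
        ∃ i1 : Fin n, (i1 : ℕ) = (p.1 : ℕ) + 1 ∧ i1 < p.2 ∧
          σ p.1 < σ p.2 ∧ σ p.2 < σ i1)).card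
      = 2 ^ (n - 1) := by
  obtain ⟨k, rfl⟩ : ∃ k, n = k + 1 := ⟨n - 1, by omega⟩
  cases k with
  | zero => decide
  | succ m =>
    show ∑ σ : Equiv.Perm (Fin (m+2)), (-1 : ℤ) ^ occ σ = 2 ^ (m + 2 - 1)
    have h1 := Finset.sum_fiberwise (univ : Finset (Equiv.Perm (Fin (m+2))))
      (fun σ => σ 0) (fun σ => (-1 : ℤ) ^ occ σ)
    rw [← h1]
    show ∑ t : Fin (m+2), F (m+1) t = 2 ^ (m + 2 - 1)
    have h2 : ∑ t : Fin (m+2), F (m+1) t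
        = ∑ t : Fin (m+2), (if m ≤ (t : ℕ) then (2:ℤ) ^ m else 0) :=
      Finset.sum_congr rfl (fun t _ => F_closed m t)
    rw [h2, Fin.sum_univ_castSucc, Fin.sum_univ_castSucc]
    have hz : ∑ i : Fin m,
        (if m ≤ ((i.castSucc.castSucc : Fin (m+2)) : ℕ) then (2:ℤ) ^ m else 0) = 0 := by
      apply Finset.sum_eq_zero
      intro i _
      rw [if_neg]
      simp only [Fin.coe_castSucc]
      exact Nat.not_le.mpr i.isLt
    rw [hz, zero_add]
    have hv1 : (((Fin.last m).castSucc : Fin (m+2)) : ℕ) = m := by simp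
    have hv2 : ((Fin.last (m+1) : Fin (m+2)) : ℕ) = m + 1 := by simp
    rw [hv1, hv2, if_pos (le_refl m), if_pos (Nat.le_succ m)]
    have : m + 2 - 1 = m + 1 := rfl
    rw [this, pow_succ]
    ring
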